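/- Fix p ∈ (0,1) and m ≥ 1. Let G̃ be the random connected graph on [m] generated as follows: choose a random tree T̃ on [m] with probability proportional to (1-p)^{-a(T)}, then independently include each of the a(T̃) edges permitted by oDFS(T̃) with probability p. Then G̃ has the same distribution as a connected graph on [m] with probability proportional to p^{s(G)} (1-p)^{-s(G)}, i.e., the same distribution as a connected component of G(n,p) conditioned to have m vertices (relabeled by [m]). -/

import Mathlib

open scoped Classical
noncomputable section

namespace RandomGraphs

variable {n : ℕ}

/-- One step of ordered depth-first search (oDFS): the state is the pair
(stack of open vertices, set of explored vertices). The first vertex of the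
stack is explored: it is removed and its unseen neighbors are prepended to the
stack in increasing order. -/
def dfsStep (G : SimpleGraph (Fin n)) :
    List (Fin n) × Finset (Fin n) → List (Fin n) × Finset (Fin n) :=
  fun st =>
    match st with
    | ([], A) => ([], A)
    | (v :: rest, A) =>
        (((G.neighborFinset v).filter
            (fun w => w ∉ A ∧ w ∉ (v :: rest))).sort (· ≤ ·) ++ rest,
          insert v A)

/-- The oDFS state at time `i`, started from the stack containing only vertex `0`
(the vertex with smallest label). -/
def dfsState (G : SimpleGraph (Fin n)) (i : ℕ) :
    List (Fin n) × Finset (Fin n) :=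
  (dfsStep G)^[i] ((List.finRange n).take 1, ∅)

/-- The stack `O_i` of open vertices at time `i`. -/
def stackAt (G : SimpleGraph (Fin n)) (i : ℕ) : List (Fin n) :=
  (dfsState G i).1

/-- The depth-first walk `X(i) = |O_i| - 1` of a connected graph. -/
def dfw (G : SimpleGraph (Fin n)) (i : ℕ) : ℕ :=
  (stackAt G i).length - 1

/-- The area `a(T) = Σ_{i=1}^{n-1} X(i)` of a tree. -/
def area (G : SimpleGraph (Fin n)) : ℕ :=
  ∑ i ∈ Finset.Ico 1 n, dfw G i

/-- The set of (unordered) edges permitted by oDFS run on `T`: non-edges `uv`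
of `T` such that both `u` and `v` lie in the stack `O_i` for some `i < n`. -/
def permittedSet (T : SimpleGraph (Fin n)) : Set (Sym2 (Fin n)) :=
  {e | ∃ u v : Fin n, e = s(u, v) ∧ u ≠ v ∧ ¬ T.Adj u v ∧
    ∃ i < n, u ∈ stackAt T i ∧ v ∈ stackAt T i}

/-- The set of neighbors of the currently explored vertex which have not been
seen before (these become new open vertices, and the corresponding edges are
the tree edges discovered at time `i`). -/
def newNbrs (G : SimpleGraph (Fin n)) (i : ℕ) : Finset (Fin n) :=
  match dfsState G i with
  | ([], _) => ∅
  | (v :: rest, A) => (G.neighborFinset v).filter (fun w => w ∉ A ∧ w ∉ (v :: rest))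

/-- The depth-first tree `T(G)` of a connected graph `G`: its edges join
the vertex explored at step `i` to each of its previously-unseen neighbors. -/
def dfTree (G : SimpleGraph (Fin n)) : SimpleGraph (Fin n) :=
  SimpleGraph.fromRel (fun u v =>
    ∃ i < n, (stackAt G i).head? = some u ∧ v ∈ newNbrs G i)


/-- The surplus `s(G) = |E(G)| - (n-1)` of a graph on `[n]`. -/
def surplus (G : SimpleGraph (Fin n)) : ℤ :=
  (G.edgeSet.ncard : ℤ) - ((n : ℤ) - 1)

/-- The (unnormalized) weight `(1-p)^{-a(T)}` of the tilted tree distribution. -/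
def treeWeight (p : ℝ) (T : SimpleGraph (Fin n)) : ℝ :=
  (1 - p) ^ (-(area T : ℤ))

/-- The probability that the two-stage procedure (pick a tree `T̃` with
probability proportional to `(1-p)^{-a(T)}`, then add each of the `a(T̃)`
permitted edges independently with probability `p`) produces the connected
graph `G`: the tree it must pick is `T(G)`, and then it must add exactly the
`s(G)` surplus edges of `G` among the `a(T(G))` permitted ones. -/
def twoStageProb (p : ℝ) (G : SimpleGraph (Fin n)) : ℝ :=
  (treeWeight p (dfTree G) /
      ∑ T ∈ Finset.univ.filter (fun T : SimpleGraph (Fin n) => T.IsTree),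
        treeWeight p T) *
    p ^ surplus G * (1 - p) ^ ((area (dfTree G) : ℤ) - surplus G)

section AuxProof

section DFS

lemma dfsState_succ (G : SimpleGraph (Fin n)) (i : ℕ) :
    dfsState G (i+1) = dfsStep G (dfsState G i) :=
  Function.iterate_succ_apply' _ _ _

lemma dfsState_zero (G : SimpleGraph (Fin n)) (hn : 0 < n) :
    dfsState G 0 = ([⟨0, hn⟩], ∅) := by
  obtain ⟨k, rfl⟩ : ∃ k, n = k + 1 := ⟨n-1, by omega⟩
  simp [dfsState, List.finRange_succ]

lemma dfsState_cons {G : SimpleGraph (Fin n)} {i : ℕ} {v : Fin n} {r : List (Fin n)}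
    {A : Finset (Fin n)} (h : dfsState G i = (v :: r, A)) :
    dfsState G (i+1) = (((G.neighborFinset v).filter
      (fun w => w ∉ A ∧ w ∉ (v :: r))).sort (· ≤ ·) ++ r, insert v A) := by
  rw [dfsState_succ, h]; rfl

lemma dfsState_nil {G : SimpleGraph (Fin n)} {i : ℕ} (h : stackAt G i = []) :
    dfsState G (i+1) = dfsState G i := by
  have h2 : dfsState G i = ([], (dfsState G i).2) := by
    rw [← h]; rfl
  rw [dfsState_succ, h2]; rfl

lemma newNbrs_eq {G : SimpleGraph (Fin n)} {i : ℕ} {v : Fin n} {r : List (Fin n)}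
    {A : Finset (Fin n)} (h : dfsState G i = (v :: r, A)) :
    newNbrs G i = (G.neighborFinset v).filter (fun w => w ∉ A ∧ w ∉ (v :: r)) := by
  unfold newNbrs; rw [h]

end DFS

/-- The set of vertices seen (explored or open) at time `i`. -/
def seenAt (G : SimpleGraph (Fin n)) (i : ℕ) : Finset (Fin n) :=
  (dfsState G i).2 ∪ (stackAt G i).toFinset

lemma stack_inv (G : SimpleGraph (Fin n)) (i : ℕ) :
    (stackAt G i).Nodup ∧ ∀ v ∈ stackAt G i, v ∉ (dfsState G i).2 := by
  induction i with
  | zero =>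
    constructor
    · exact (List.take_sublist _ _).nodup (List.nodup_finRange n)
    · intro v _ hv
      simp [dfsState] at hv
  | succ i ih =>
    rcases hst : dfsState G i with ⟨l, A⟩
    have hl : stackAt G i = l := by rw [stackAt, hst]
    rw [hl] at ih
    cases l with
    | nil =>
      have := dfsState_nil (G := G) (i := i) hl
      rw [stackAt, this, hst]
      simpa [hst] using ih
    | cons v r =>
      rw [stackAt, dfsState_cons hst]
      obtain ⟨hnd, hA⟩ := ih
      have hAeq : (dfsState G i).2 = A := by rw [hst]
      rw [hAeq] at hA
      constructor
      · rw [List.nodup_append]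
        refine ⟨Finset.sort_nodup _ _, hnd.of_cons, ?_⟩
        intro x hx y hy hxy
        subst hxy
        have : x ∈ (G.neighborFinset v).filter (fun w => w ∉ A ∧ w ∉ (v :: r)) := by
          simpa [Finset.mem_sort] using hx
        have := (Finset.mem_filter.1 this).2.2
        exact this (List.mem_cons_of_mem _ hy)
      · intro x hx
        rcases List.mem_append.1 hx with hx | hx
        · have : x ∈ (G.neighborFinset v).filter (fun w => w ∉ A ∧ w ∉ (v :: r)) := by
            simpa [Finset.mem_sort] using hx
          obtain ⟨-, hxA, hxs⟩ := Finset.mem_filter.1 this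
          simp only [Finset.mem_insert]
          push_neg
          exact ⟨fun h => hxs (h ▸ List.mem_cons_self), hxA⟩
        · simp only [Finset.mem_insert]
          push_neg
          exact ⟨fun h => (List.nodup_cons.1 hnd).1 (h ▸ hx), hA x (List.mem_cons_of_mem _ hx)⟩
  
lemma stack_nodup (G : SimpleGraph (Fin n)) (i : ℕ) : (stackAt G i).Nodup := (stack_inv G i).1

lemma stack_not_mem_A {G : SimpleGraph (Fin n)} {i : ℕ} {v : Fin n}
    (h : v ∈ stackAt G i) : v ∉ (dfsState G i).2 := (stack_inv G i).2 v h

lemma seen_mono_succ (G : SimpleGraph (Fin n)) (i : ℕ) : seenAt G i ⊆ seenAt G (i+1) := by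
  rcases hst : dfsState G i with ⟨l, A⟩
  have hl : stackAt G i = l := by rw [stackAt, hst]
  cases l with
  | nil =>
    rw [seenAt, seenAt, stackAt, stackAt, dfsState_nil hl]
  | cons v r =>
    intro x hx
    rw [seenAt, stackAt, dfsState_cons hst]
    rw [seenAt, hl, hst] at hx
    simp only [Finset.mem_union, Finset.mem_insert, List.mem_toFinset, List.mem_append,
      List.mem_cons] at hx ⊢
    tauto

lemma seen_mono (G : SimpleGraph (Fin n)) {i j : ℕ} (h : i ≤ j) : seenAt G i ⊆ seenAt G j := by
  induction j, h using Nat.le_induction with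
  | base => exact subset_rfl
  | succ j _ ih => exact ih.trans (seen_mono_succ G j)

lemma A_mono_succ (G : SimpleGraph (Fin n)) (i : ℕ) :
    (dfsState G i).2 ⊆ (dfsState G (i+1)).2 := by
  rcases hst : dfsState G i with ⟨l, A⟩
  have hl : stackAt G i = l := by rw [stackAt, hst]
  cases l with
  | nil => rw [dfsState_nil hl, hst]
  | cons v r => rw [dfsState_cons hst]; exact Finset.subset_insert _ _

lemma A_mono (G : SimpleGraph (Fin n)) {i j : ℕ} (h : i ≤ j) :
    (dfsState G i).2 ⊆ (dfsState G j).2 := by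
  induction j, h using Nat.le_induction with
  | base => exact subset_rfl
  | succ j _ ih => exact ih.trans (A_mono_succ G j)

lemma stack_persist {G : SimpleGraph (Fin n)} {i : ℕ} {x : Fin n} (hx : x ∈ stackAt G i) :
    (stackAt G i).head? = some x ∨ x ∈ stackAt G (i+1) := by
  rcases hst : dfsState G i with ⟨l, A⟩
  have hl : stackAt G i = l := by rw [stackAt, hst]
  rw [hl] at hx ⊢
  cases l with
  | nil => simp at hx
  | cons v r =>
    rcases List.mem_cons.1 hx with rfl | hx
    · exact Or.inl rfl
    · right
      rw [stackAt, dfsState_cons hst]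
      exact List.mem_append_right _ hx

lemma head_mem_A_succ {G : SimpleGraph (Fin n)} {i : ℕ} {v : Fin n}
    (h : (stackAt G i).head? = some v) : v ∈ (dfsState G (i+1)).2 := by
  rcases hst : dfsState G i with ⟨l, A⟩
  have hl : stackAt G i = l := by rw [stackAt, hst]
  rw [hl] at h
  cases l with
  | nil => simp at h
  | cons u r =>
    obtain rfl : u = v := by simpa using h
    rw [dfsState_cons hst]
    exact Finset.mem_insert_self _ _

lemma mem_stack_of_head {G : SimpleGraph (Fin n)} {i : ℕ} {v : Fin n}
    (h : (stackAt G i).head? = some v) : v ∈ stackAt G i := by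
  cases hl : stackAt G i with
  | nil => rw [hl] at h; simp at h
  | cons u r =>
    rw [hl] at h
    simp only [List.head?_cons, Option.some.injEq] at h
    subst h
    exact List.mem_cons_self

lemma head_unique {G : SimpleGraph (Fin n)} {t t' : ℕ} {v : Fin n}
    (h : (stackAt G t).head? = some v) (h' : (stackAt G t').head? = some v) : t = t' := by
  by_contra hne
  wlog hlt : t < t' generalizing t t'
  · exact this h' h (Ne.symm hne) (by omega)
  have hv : v ∈ (dfsState G t').2 := A_mono G hlt (head_mem_A_succ h)
  exact stack_not_mem_A (mem_stack_of_head h') hv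

lemma explored_of_mem_A {G : SimpleGraph (Fin n)} {j : ℕ} {x : Fin n}
    (hx : x ∈ (dfsState G j).2) : ∃ t < j, (stackAt G t).head? = some x := by
  induction j with
  | zero => simp [dfsState] at hx
  | succ j ih =>
    rcases hst : dfsState G j with ⟨l, A⟩
    have hl : stackAt G j = l := by rw [stackAt, hst]
    cases l with
    | nil =>
      rw [dfsState_nil hl] at hx
      obtain ⟨t, ht, h⟩ := ih hx
      exact ⟨t, by omega, h⟩
    | cons v r =>
      rw [dfsState_cons hst] at hx
      rcases Finset.mem_insert.1 hx with rfl | hx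
      · exact ⟨j, by omega, by rw [hl]; rfl⟩
      · obtain ⟨t, ht, h⟩ := ih (by rw [hst]; exact hx)
        exact ⟨t, by omega, h⟩


lemma adj_closed (G : SimpleGraph (Fin n)) (i : ℕ) :
    ∀ a ∈ (dfsState G i).2, ∀ w, G.Adj a w → w ∈ seenAt G i := by
  induction i with
  | zero => intro a ha; simp [dfsState] at ha
  | succ i ih =>
    rcases hst : dfsState G i with ⟨l, A⟩
    have hl : stackAt G i = l := by rw [stackAt, hst]
    cases l with
    | nil =>
      intro a ha w hw
      rw [dfsState_nil hl] at ha
      rw [seenAt, stackAt, dfsState_nil hl]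
      exact ih a ha w hw
    | cons v r =>
      intro a ha w hw
      rw [dfsState_cons hst] at ha
      have hsub := seen_mono_succ G i
      rcases Finset.mem_insert.1 ha with rfl | ha
      · by_cases hcase : w ∉ A ∧ w ∉ (a :: r)
        · have : w ∈ (G.neighborFinset a).filter (fun w => w ∉ A ∧ w ∉ (a :: r)) :=
            Finset.mem_filter.2 ⟨SimpleGraph.mem_neighborFinset _ _ _ |>.2 hw, hcase⟩
          rw [seenAt, stackAt, dfsState_cons hst]
          refine Finset.mem_union_right _ ?_
          rw [List.mem_toFinset]
          exact List.mem_append_left _ ((Finset.mem_sort _).2 this)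
        · push_neg at hcase
          refine hsub ?_
          rw [seenAt, hl, hst]
          by_cases hA : w ∈ A
          · exact Finset.mem_union_left _ hA
          · exact Finset.mem_union_right _ (List.mem_toFinset.2 (hcase hA))
      · exact hsub (ih a (by rw [hst]; exact ha) w hw)

lemma zero_mem_seen (G : SimpleGraph (Fin n)) (hn : 0 < n) (i : ℕ) :
    (⟨0, hn⟩ : Fin n) ∈ seenAt G i := by
  refine seen_mono G (Nat.zero_le i) ?_
  rw [seenAt, stackAt, dfsState_zero G hn]
  simp

lemma A_eq_univ_of_nil {G : SimpleGraph (Fin n)} (hG : G.Connected) (hn : 0 < n) {i : ℕ}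
    (hnil : stackAt G i = []) : (dfsState G i).2 = Finset.univ := by
  have hseen : seenAt G i = (dfsState G i).2 := by
    rw [seenAt, stackAt] at *
    rw [hnil]; simp
  have h0 : (⟨0, hn⟩ : Fin n) ∈ (dfsState G i).2 := by
    rw [← hseen]; exact zero_mem_seen G hn i
  have key : ∀ (u w : Fin n), u ∈ (dfsState G i).2 → G.Walk u w → w ∈ (dfsState G i).2 := by
    intro u w hu p
    induction p with
    | nil => exact hu
    | cons h p ih =>
      refine ih ?_
      have := adj_closed G i _ hu _ h
      rw [hseen] at this
      exact this
  refine Finset.eq_univ_of_forall fun v => ?_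
  exact key _ v h0 (hG.preconnected ⟨0, hn⟩ v).some

lemma conn_card {G : SimpleGraph (Fin n)} (hG : G.Connected) (hn : 0 < n) :
    ∀ i ≤ n, (dfsState G i).2.card = i ∧ (i < n → stackAt G i ≠ []) := by
  intro i
  induction i with
  | zero =>
    intro _
    constructor
    · rw [show (dfsState G 0).2 = ∅ by rw [dfsState_zero G hn]]; rfl
    · intro _
      rw [stackAt, dfsState_zero G hn]
      simp
  | succ i ih =>
    intro hi1
    obtain ⟨hcard, hne⟩ := ih (by omega)
    have hlne := hne (by omega)
    rcases hl : stackAt G i with _ | ⟨v, r⟩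
    · exact absurd hl hlne
    have hst : dfsState G i = (v :: r, (dfsState G i).2) := by
      rw [← hl]
      rfl
    have hv : v ∉ (dfsState G i).2 := stack_not_mem_A (by rw [hl]; exact List.mem_cons_self)
    have hA1 : (dfsState G (i+1)).2 = insert v (dfsState G i).2 := by
      rw [dfsState_cons hst]
    have hcount : (dfsState G (i+1)).2.card = i + 1 := by
      rw [hA1, Finset.card_insert_of_notMem hv, hcard]
    refine ⟨hcount, ?_⟩
    intro hlt hnil
    have hu := A_eq_univ_of_nil hG hn hnil
    rw [hu, Finset.card_univ, Fintype.card_fin] at hcount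
    omega

lemma stack_ne_nil {G : SimpleGraph (Fin n)} (hG : G.Connected) (hn : 0 < n) {i : ℕ}
    (hi : i < n) : stackAt G i ≠ [] := (conn_card hG hn i (by omega)).2 hi

lemma A_univ {G : SimpleGraph (Fin n)} (hG : G.Connected) (hn : 0 < n) :
    (dfsState G n).2 = Finset.univ := by
  have := (conn_card hG hn n le_rfl).1
  refine Finset.eq_univ_of_card _ ?_
  rw [this, Fintype.card_fin]

lemma stack_nil_n {G : SimpleGraph (Fin n)} (hG : G.Connected) (hn : 0 < n) :
    stackAt G n = [] := by
  rcases hl : stackAt G n with _ | ⟨v, r⟩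
  · rfl
  · exfalso
    have hv : v ∈ stackAt G n := by rw [hl]; exact List.mem_cons_self
    exact stack_not_mem_A hv (by rw [A_univ hG hn]; exact Finset.mem_univ _)
  
lemma stack_nil_of_ge {G : SimpleGraph (Fin n)} (hG : G.Connected) (hn : 0 < n) {i : ℕ}
    (hi : n ≤ i) : stackAt G i = [] := by
  induction i, hi using Nat.le_induction with
  | base => exact stack_nil_n hG hn
  | succ j _ ih => rw [stackAt, dfsState_nil ih]; exact ih

lemma lt_of_stack_ne_nil {G : SimpleGraph (Fin n)} (hG : G.Connected) (hn : 0 < n) {i : ℕ}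
    (h : stackAt G i ≠ []) : i < n := by
  by_contra hc
  exact h (stack_nil_of_ge hG hn (by omega))

/-- The exploration time of a vertex. -/
def eT (G : SimpleGraph (Fin n)) (v : Fin n) : ℕ := sInf {t | (stackAt G t).head? = some v}

lemma exists_head {G : SimpleGraph (Fin n)} (hG : G.Connected) (hn : 0 < n) (v : Fin n) :
    ∃ t < n, (stackAt G t).head? = some v := by
  have : v ∈ (dfsState G n).2 := by rw [A_univ hG hn]; exact Finset.mem_univ _
  exact explored_of_mem_A this

lemma eT_spec {G : SimpleGraph (Fin n)} (hG : G.Connected) (hn : 0 < n) (v : Fin n) :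
    (stackAt G (eT G v)).head? = some v := by
  obtain ⟨t, _, ht⟩ := exists_head hG hn v
  exact Nat.sInf_mem (⟨t, ht⟩ : {t | (stackAt G t).head? = some v}.Nonempty)

lemma eT_lt {G : SimpleGraph (Fin n)} (hG : G.Connected) (hn : 0 < n) (v : Fin n) :
    eT G v < n := by
  obtain ⟨t, htn, ht⟩ := exists_head hG hn v
  exact lt_of_le_of_lt (Nat.sInf_le ht) htn

lemma head_eq_eT {G : SimpleGraph (Fin n)} (hG : G.Connected) (hn : 0 < n) {v : Fin n} {t : ℕ}
    (h : (stackAt G t).head? = some v) : t = eT G v :=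
  head_unique h (eT_spec hG hn v)

lemma eT_inj {G : SimpleGraph (Fin n)} (hG : G.Connected) (hn : 0 < n) {u v : Fin n}
    (h : eT G u = eT G v) : u = v := by
  have h1 := eT_spec hG hn u
  have h2 := eT_spec hG hn v
  rw [h] at h1
  rw [h1] at h2
  exact Option.some_injective _ h2

lemma mem_A_iff {G : SimpleGraph (Fin n)} (hG : G.Connected) (hn : 0 < n) {v : Fin n} {i : ℕ} :
    v ∈ (dfsState G i).2 ↔ eT G v < i := by
  constructor
  · intro h
    obtain ⟨t, ht, hh⟩ := explored_of_mem_A h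
    rw [← head_eq_eT hG hn hh]
    exact ht
  · intro h
    exact A_mono G h (head_mem_A_succ (eT_spec hG hn v))

lemma le_eT_of_mem_stack {G : SimpleGraph (Fin n)} (hG : G.Connected) (hn : 0 < n) {v : Fin n}
    {i : ℕ} (h : v ∈ stackAt G i) : i ≤ eT G v := by
  by_contra hc
  exact stack_not_mem_A h ((mem_A_iff hG hn).2 (by omega))

lemma stack_persist_until {G : SimpleGraph (Fin n)} (hG : G.Connected) (hn : 0 < n) {v : Fin n}
    {i j : ℕ} (hv : v ∈ stackAt G i) (hij : i ≤ j) (hje : j ≤ eT G v) : v ∈ stackAt G j := by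
  induction j, hij using Nat.le_induction with
  | base => exact hv
  | succ j hj ih =>
    have hvj : v ∈ stackAt G j := ih (by omega)
    rcases stack_persist hvj with h | h
    · have := head_eq_eT hG hn h
      omega
    · exact h

lemma mem_stack_of_seen {G : SimpleGraph (Fin n)} (hG : G.Connected) (hn : 0 < n) {v : Fin n}
    {i : ℕ} (hs : v ∈ seenAt G i) (he : i ≤ eT G v) : v ∈ stackAt G i := by
  rcases Finset.mem_union.1 hs with h | h
  · rw [mem_A_iff hG hn] at h; omega
  · exact List.mem_toFinset.1 h


lemma mem_newNbrs_iff {G : SimpleGraph (Fin n)} {i : ℕ} {w : Fin n} :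
    w ∈ newNbrs G i ↔ ∃ v r A, dfsState G i = (v :: r, A) ∧ G.Adj v w ∧ w ∉ A ∧ w ∉ (v :: r) := by
  rcases hst : dfsState G i with ⟨l, A⟩
  cases l with
  | nil =>
    have : newNbrs G i = ∅ := by unfold newNbrs; rw [hst]
    rw [this]
    simp only [Finset.notMem_empty, false_iff]
    rintro ⟨v, r, A', hst', -⟩
    simp at hst'
  | cons v r =>
    rw [newNbrs_eq hst]
    constructor
    · intro h
      obtain ⟨hadj, h1, h2⟩ := Finset.mem_filter.1 h
      exact ⟨v, r, A, rfl, (SimpleGraph.mem_neighborFinset _ _ _).1 hadj, h1, h2⟩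
    · rintro ⟨v', r', A', hst', hadj, h1, h2⟩
      simp only [Prod.mk.injEq, List.cons.injEq] at hst'
      obtain ⟨⟨rfl, rfl⟩, rfl⟩ := hst'
      exact Finset.mem_filter.2 ⟨(SimpleGraph.mem_neighborFinset _ _ _).2 hadj, h1, h2⟩

lemma not_seen_of_newNbrs {G : SimpleGraph (Fin n)} {i : ℕ} {w : Fin n}
    (h : w ∈ newNbrs G i) : w ∉ seenAt G i := by
  obtain ⟨v, r, A, hst, -, h1, h2⟩ := mem_newNbrs_iff.1 h
  rw [seenAt, stackAt, hst]
  simp only [Finset.mem_union, List.mem_toFinset]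
  rintro (hA | hs)
  · exact h1 hA
  · exact h2 hs

lemma mem_stack_succ_of_newNbrs {G : SimpleGraph (Fin n)} {i : ℕ} {w : Fin n}
    (h : w ∈ newNbrs G i) : w ∈ stackAt G (i+1) := by
  obtain ⟨v, r, A, hst, hadj, h1, h2⟩ := mem_newNbrs_iff.1 h
  rw [stackAt, dfsState_cons hst]
  refine List.mem_append_left _ ?_
  rw [Finset.mem_sort]
  exact Finset.mem_filter.2 ⟨(SimpleGraph.mem_neighborFinset _ _ _).2 hadj, h1, h2⟩

lemma newNbrs_unique {G : SimpleGraph (Fin n)} {i j : ℕ} {w : Fin n}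
    (hi : w ∈ newNbrs G i) (hj : w ∈ newNbrs G j) : i = j := by
  by_contra hne
  wlog hlt : i < j generalizing i j
  · exact this hj hi (Ne.symm hne) (by omega)
  have h1 : w ∈ seenAt G j := by
    refine seen_mono G (show i + 1 ≤ j by omega) ?_
    exact Finset.mem_union_right _ (List.mem_toFinset.2 (mem_stack_succ_of_newNbrs hi))
  exact not_seen_of_newNbrs hj h1

/-- The discovery time of a vertex. -/
def dT (G : SimpleGraph (Fin n)) (v : Fin n) : ℕ := sInf {i | v ∈ newNbrs G i}

/-- The parent of a vertex in the depth-first tree. -/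
def par (G : SimpleGraph (Fin n)) (v : Fin n) : Fin n :=
  ((stackAt G (dT G v)).head?).getD v

lemma seen_nil_succ {G : SimpleGraph (Fin n)} {i : ℕ} (h : stackAt G i = []) :
    seenAt G (i+1) = seenAt G i := by
  rw [seenAt, seenAt, stackAt, stackAt, dfsState_nil h]

lemma discovered_iff {G : SimpleGraph (Fin n)} (hG : G.Connected) (hn : 0 < n) {v : Fin n} :
    (∃ i, v ∈ newNbrs G i) ↔ v ≠ ⟨0, hn⟩ := by
  constructor
  · rintro ⟨i, hi⟩ rfl
    exact not_seen_of_newNbrs hi (zero_mem_seen G hn i)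
  · intro hv
    have hne : {j | v ∈ seenAt G j}.Nonempty := by
      refine ⟨n, ?_⟩
      show v ∈ seenAt G n
      refine Finset.mem_union_left _ ?_
      rw [A_univ hG hn]
      exact Finset.mem_univ _
    obtain ⟨j, hjdef⟩ : ∃ j, j = sInf {j | v ∈ seenAt G j} := ⟨_, rfl⟩
    have hjm : v ∈ seenAt G j := hjdef ▸ Nat.sInf_mem hne
    have hj0 : j ≠ 0 := by
      intro h0
      rw [h0] at hjm
      rw [seenAt, stackAt, dfsState_zero G hn] at hjm
      simp only [Finset.mem_union, Finset.notMem_empty, List.mem_toFinset, List.mem_singleton,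
        false_or] at hjm
      exact hv hjm
    obtain ⟨k, rfl⟩ : ∃ k, j = k + 1 := ⟨j - 1, by omega⟩
    have hkm : v ∉ seenAt G k := fun h => by
      have := Nat.sInf_le (show k ∈ {j | v ∈ seenAt G j} from h)
      rw [← hjdef] at this
      omega
    rcases hl : stackAt G k with _ | ⟨u, r⟩
    · rw [seen_nil_succ hl] at hjm
      exact absurd hjm hkm
    have hst : dfsState G k = (u :: r, (dfsState G k).2) := by rw [← hl]; rfl
    refine ⟨k, (newNbrs_eq hst).symm ▸ ?_⟩
    rw [seenAt, stackAt, dfsState_cons hst] at hjm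
    simp only [Finset.mem_union, Finset.mem_insert, List.mem_toFinset, List.mem_append] at hjm
    have hnotA : v ∉ (dfsState G k).2 := by
      intro h
      exact hkm (Finset.mem_union_left _ h)
    have hnotS : v ∉ u :: r := by
      intro h
      refine hkm (Finset.mem_union_right _ ?_)
      rw [hl]
      exact List.mem_toFinset.2 h
    rcases hjm with (rfl | hA) | hnew | hr
    · exact absurd (List.mem_cons_self) hnotS
    · exact absurd hA hnotA
    · rw [Finset.mem_sort] at hnew
      exact hnew
    · exact absurd (List.mem_cons_of_mem _ hr) hnotS

lemma dT_spec {G : SimpleGraph (Fin n)} (hG : G.Connected) (hn : 0 < n) {v : Fin n}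
    (hv : v ≠ ⟨0, hn⟩) : v ∈ newNbrs G (dT G v) :=
  Nat.sInf_mem ((discovered_iff hG hn).2 hv)

lemma dT_eq {G : SimpleGraph (Fin n)} {v : Fin n} {i : ℕ} (h : v ∈ newNbrs G i) :
    dT G v = i :=
  newNbrs_unique (Nat.sInf_mem (⟨i, h⟩ : {i | v ∈ newNbrs G i}.Nonempty)) h

lemma par_head {G : SimpleGraph (Fin n)} (hG : G.Connected) (hn : 0 < n) {v : Fin n}
    (hv : v ≠ ⟨0, hn⟩) : (stackAt G (dT G v)).head? = some (par G v) := by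
  obtain ⟨u, r, A, hst, -⟩ := mem_newNbrs_iff.1 (dT_spec hG hn hv)
  rw [par, stackAt, hst]
  rfl

lemma eT_par {G : SimpleGraph (Fin n)} (hG : G.Connected) (hn : 0 < n) {v : Fin n}
    (hv : v ≠ ⟨0, hn⟩) : eT G (par G v) = dT G v :=
  (head_eq_eT hG hn (par_head hG hn hv)).symm

lemma eT_par_lt {G : SimpleGraph (Fin n)} (hG : G.Connected) (hn : 0 < n) {v : Fin n}
    (hv : v ≠ ⟨0, hn⟩) : eT G (par G v) < eT G v := by
  rw [eT_par hG hn hv]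
  have hs : v ∈ stackAt G (dT G v + 1) := mem_stack_succ_of_newNbrs (dT_spec hG hn hv)
  have := le_eT_of_mem_stack hG hn hs
  omega

lemma par_ne {G : SimpleGraph (Fin n)} (hG : G.Connected) (hn : 0 < n) {v : Fin n}
    (hv : v ≠ ⟨0, hn⟩) : par G v ≠ v := by
  intro h
  have := eT_par_lt hG hn hv
  rw [h] at this
  omega

lemma rel_iff {G : SimpleGraph (Fin n)} (hG : G.Connected) (hn : 0 < n) {u v : Fin n} :
    (∃ i < n, (stackAt G i).head? = some u ∧ v ∈ newNbrs G i) ↔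
      (v ≠ ⟨0, hn⟩ ∧ u = par G v) := by
  constructor
  · rintro ⟨i, hin, hhd, hnew⟩
    have hv : v ≠ ⟨0, hn⟩ := (discovered_iff hG hn).1 ⟨i, hnew⟩
    have hdt : dT G v = i := dT_eq hnew
    have := par_head hG hn hv
    rw [hdt, hhd] at this
    exact ⟨hv, Option.some_injective _ this⟩
  · rintro ⟨hv, rfl⟩
    refine ⟨dT G v, ?_, par_head hG hn hv, dT_spec hG hn hv⟩
    have := mem_stack_succ_of_newNbrs (dT_spec hG hn hv)
    refine lt_of_stack_ne_nil hG hn ?_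
    obtain ⟨u', r, A, hst, -⟩ := mem_newNbrs_iff.1 (dT_spec hG hn hv)
    rw [stackAt, hst]
    simp

lemma dfTree_adj {G : SimpleGraph (Fin n)} (hG : G.Connected) (hn : 0 < n) {u v : Fin n} :
    (dfTree G).Adj u v ↔
      ((v ≠ ⟨0, hn⟩ ∧ u = par G v) ∨ (u ≠ ⟨0, hn⟩ ∧ v = par G u)) := by
  rw [dfTree, SimpleGraph.fromRel_adj]
  rw [rel_iff hG hn, rel_iff hG hn]
  constructor
  · rintro ⟨-, h⟩; exact h
  · intro h
    refine ⟨?_, h⟩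
    rcases h with ⟨hv, rfl⟩ | ⟨hu, rfl⟩
    · exact par_ne hG hn hv
    · exact (par_ne hG hn hu).symm

lemma dfTree_le (G : SimpleGraph (Fin n)) : dfTree G ≤ G := by
  intro u v h
  rw [dfTree, SimpleGraph.fromRel_adj] at h
  obtain ⟨-, h | h⟩ := h
  · obtain ⟨i, -, hhd, hnew⟩ := h
    obtain ⟨v', r, A, hst, hadj, -⟩ := mem_newNbrs_iff.1 hnew
    have : (stackAt G i).head? = some v' := by rw [stackAt, hst]; rfl
    rw [this] at hhd
    obtain rfl := Option.some_injective _ hhd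
    exact hadj
  · obtain ⟨i, -, hhd, hnew⟩ := h
    obtain ⟨v', r, A, hst, hadj, -⟩ := mem_newNbrs_iff.1 hnew
    have : (stackAt G i).head? = some v' := by rw [stackAt, hst]; rfl
    rw [this] at hhd
    obtain rfl := Option.some_injective _ hhd
    exact hadj.symm

lemma dfTree_connected {G : SimpleGraph (Fin n)} (hG : G.Connected) (hn : 0 < n) :
    (dfTree G).Connected := by
  have key : ∀ k (v : Fin n), eT G v = k → (dfTree G).Reachable ⟨0, hn⟩ v := by
    intro k
    induction k using Nat.strong_induction_on with
    | _ k ih =>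
      intro v hv
      by_cases h0 : v = ⟨0, hn⟩
      · exact h0 ▸ SimpleGraph.Reachable.refl _
      · have hadj : (dfTree G).Adj (par G v) v := (dfTree_adj hG hn).2 (Or.inl ⟨h0, rfl⟩)
        have hlt := eT_par_lt hG hn h0
        rw [hv] at hlt
        exact (ih _ hlt _ rfl).trans hadj.reachable
  have hreach : ∀ v, (dfTree G).Reachable ⟨0, hn⟩ v := fun v => key _ v rfl
  have : Nonempty (Fin n) := ⟨⟨0, hn⟩⟩
  exact SimpleGraph.Connected.mk (fun u v => (hreach u).symm.trans (hreach v))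

lemma dfTree_edgeFinset {G : SimpleGraph (Fin n)} (hG : G.Connected) (hn : 0 < n) :
    (dfTree G).edgeFinset = (Finset.univ.erase ⟨0, hn⟩).image (fun v => s(par G v, v)) := by
  ext e
  induction e with
  | _ a b =>
    rw [SimpleGraph.mem_edgeFinset, SimpleGraph.mem_edgeSet]
    constructor
    · intro h
      rcases (dfTree_adj hG hn).1 h with ⟨hb, rfl⟩ | ⟨ha, rfl⟩
      · exact Finset.mem_image.2 ⟨b, Finset.mem_erase.2 ⟨hb, Finset.mem_univ _⟩, rfl⟩
      · exact Finset.mem_image.2 ⟨a, Finset.mem_erase.2 ⟨ha, Finset.mem_univ _⟩, Sym2.eq_swap⟩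
    · intro h
      obtain ⟨v, hv, he⟩ := Finset.mem_image.1 h
      have hv0 := (Finset.mem_erase.1 hv).1
      have hadj : (dfTree G).Adj (par G v) v := (dfTree_adj hG hn).2 (Or.inl ⟨hv0, rfl⟩)
      rcases Sym2.eq_iff.1 he.symm with ⟨rfl, rfl⟩ | ⟨rfl, rfl⟩
      · exact hadj
      · exact hadj.symm

lemma dfTree_card {G : SimpleGraph (Fin n)} (hG : G.Connected) (hn : 0 < n) :
    (dfTree G).edgeFinset.card = n - 1 := by
  rw [dfTree_edgeFinset hG hn]
  rw [Finset.card_image_of_injOn, Finset.card_erase_of_mem (Finset.mem_univ _),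
    Finset.card_univ, Fintype.card_fin]
  intro a ha b hb hab
  have ha0 := (Finset.mem_erase.1 ha).1
  have hb0 := (Finset.mem_erase.1 hb).1
  rcases Sym2.eq_iff.1 hab with ⟨-, h⟩ | ⟨h1, h2⟩
  · exact h
  · exfalso
    have l1 := eT_par_lt hG hn ha0
    have l2 := eT_par_lt hG hn hb0
    rw [h1] at l1
    rw [← h2] at l2
    omega


lemma acyclic_of_parent {V : Type*} (G : SimpleGraph V) (r : V → ℕ) (f : V → V)
    (h : ∀ u v, G.Adj u v → (u = f v ∧ r u < r v) ∨ (v = f u ∧ r v < r u)) :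
    G.IsAcyclic := by
  intro v c hc
  have hvs : v ∈ c.support := c.start_mem_support
  obtain ⟨w, hw, hmax⟩ := c.support.toFinset.exists_max_image r
    ⟨v, List.mem_toFinset.2 hvs⟩
  rw [List.mem_toFinset] at hw
  have hmax' : ∀ y ∈ c.support, r y ≤ r w := fun y hy => hmax y (List.mem_toFinset.2 hy)
  have hcyc' := hc.rotate hw
  have hsup : ∀ y ∈ (c.rotate w hw).support, r y ≤ r w := by
    intro y hy
    rw [(c.rotate w hw).support_eq_cons] at hy
    rcases List.mem_cons.1 hy with rfl | hy
    · exact le_rfl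
    · refine hmax' y ?_
      have := (SimpleGraph.Walk.support_rotate c w hw).mem_iff.1 hy
      exact List.mem_of_mem_tail this
  revert hcyc' hsup
  generalize c.rotate w hw = c'
  intro hcyc' hsup
  cases c' with
  | nil => exact hcyc'.ne_nil rfl
  | @cons _ u _ hadj q =>
    have hu : u ∈ (SimpleGraph.Walk.cons hadj q).support := by
      rw [SimpleGraph.Walk.support_cons]
      exact List.mem_cons_of_mem _ q.start_mem_support
    have huf : u = f w := by
      rcases h w u hadj with ⟨hwf, hlt⟩ | ⟨huf, -⟩
      · exact absurd (hsup u hu) (by omega)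
      · exact huf
    have hne : w ≠ u := hadj.ne
    obtain ⟨x, hadj2, q₂, hq2⟩ := SimpleGraph.Walk.exists_eq_cons_of_ne hne q.reverse
    have hxs : x ∈ (SimpleGraph.Walk.cons hadj q).support := by
      rw [SimpleGraph.Walk.support_cons]
      refine List.mem_cons_of_mem _ ?_
      have : x ∈ q.reverse.support := by
        rw [hq2, SimpleGraph.Walk.support_cons]
        exact List.mem_cons_of_mem _ q₂.start_mem_support
      rwa [SimpleGraph.Walk.support_reverse, List.mem_reverse] at this
    have hxf : x = f w := by
      rcases h w x hadj2 with ⟨hwf, hlt⟩ | ⟨hxf, -⟩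
      · exact absurd (hsup x hxs) (by omega)
      · exact hxf
    have hxu : x = u := hxf.trans huf.symm
    subst hxu
    -- q.reverse = cons hadj2 q₂ with q₂ : Walk x u and x = u, so q₂ is a closed path
    have hqpath : q.IsPath := ((SimpleGraph.Walk.cons_isCycle_iff _ _).1 hcyc').1
    have hq2path : q₂.IsPath := by
      have := hqpath.reverse
      rw [hq2] at this
      exact this.of_cons
    have hq2nil : q₂ = SimpleGraph.Walk.nil := by
      have := SimpleGraph.Path.loop_eq ⟨q₂, hq2path⟩
      exact congrArg Subtype.val this
    have hlen : q.length = 1 := by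
      have := congrArg SimpleGraph.Walk.length hq2
      rw [SimpleGraph.Walk.length_reverse, SimpleGraph.Walk.length_cons, hq2nil,
        SimpleGraph.Walk.length_nil] at this
      omega
    have := hcyc'.three_le_length
    rw [SimpleGraph.Walk.length_cons, hlen] at this
    omega

lemma dfTree_isAcyclic {G : SimpleGraph (Fin n)} (hG : G.Connected) (hn : 0 < n) :
    (dfTree G).IsAcyclic := by
  refine acyclic_of_parent _ (eT G) (par G) ?_
  intro u v hadj
  rcases (dfTree_adj hG hn).1 hadj with ⟨hv, rfl⟩ | ⟨hu, rfl⟩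
  · exact Or.inl ⟨rfl, eT_par_lt hG hn hv⟩
  · exact Or.inr ⟨rfl, eT_par_lt hG hn hu⟩

lemma dfTree_isTree {G : SimpleGraph (Fin n)} (hG : G.Connected) (hn : 0 < n) :
    (dfTree G).IsTree :=
  ⟨dfTree_connected hG hn, dfTree_isAcyclic hG hn⟩


lemma filter_eq_dfTree {G : SimpleGraph (Fin n)} (hG : G.Connected) (hn : 0 < n) {i : ℕ}
    {v : Fin n} {r : List (Fin n)} {A : Finset (Fin n)} (hst : dfsState G i = (v :: r, A)) :
    ((dfTree G).neighborFinset v).filter (fun w => w ∉ A ∧ w ∉ (v :: r)) =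
      (G.neighborFinset v).filter (fun w => w ∉ A ∧ w ∉ (v :: r)) := by
  ext w
  simp only [Finset.mem_filter, SimpleGraph.mem_neighborFinset]
  constructor
  · rintro ⟨hadj, hP⟩
    exact ⟨dfTree_le G hadj, hP⟩
  · rintro ⟨hadj, hP⟩
    refine ⟨?_, hP⟩
    have hnew : w ∈ newNbrs G i := mem_newNbrs_iff.2 ⟨v, r, A, hst, hadj, hP.1, hP.2⟩
    have hlt : i < n := by
      refine lt_of_stack_ne_nil hG hn ?_
      rw [stackAt, hst]
      simp
    rw [dfTree, SimpleGraph.fromRel_adj]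
    refine ⟨fun h => hP.2 (h ▸ List.mem_cons_self), Or.inl ?_⟩
    exact ⟨i, hlt, by rw [stackAt, hst]; rfl, hnew⟩

lemma runEq_dfTree {G : SimpleGraph (Fin n)} (hG : G.Connected) (hn : 0 < n) (i : ℕ) :
    dfsState (dfTree G) i = dfsState G i := by
  induction i with
  | zero => rfl
  | succ i ih =>
    rcases hst : dfsState G i with ⟨l, A⟩
    cases l with
    | nil =>
      have hl : stackAt G i = [] := by rw [stackAt, hst]
      have hl' : stackAt (dfTree G) i = [] := by rw [stackAt, ih, hst]
      rw [dfsState_nil hl, dfsState_nil hl', ih]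
    | cons v r =>
      rw [dfsState_cons hst, dfsState_cons (ih.trans hst), filter_eq_dfTree hG hn hst]

lemma newNbrs_dfTree {G : SimpleGraph (Fin n)} (hG : G.Connected) (hn : 0 < n) (i : ℕ) :
    newNbrs (dfTree G) i = newNbrs G i := by
  rcases hst : dfsState G i with ⟨l, A⟩
  have hst' : dfsState (dfTree G) i = (l, A) := by rw [runEq_dfTree hG hn, hst]
  cases l with
  | nil =>
    unfold newNbrs
    rw [hst, hst']
  | cons v r =>
    rw [newNbrs_eq hst, newNbrs_eq hst', filter_eq_dfTree hG hn hst]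

lemma dfTree_congr {G₁ G₂ : SimpleGraph (Fin n)}
    (hs : ∀ i, stackAt G₁ i = stackAt G₂ i) (hN : ∀ i, newNbrs G₁ i = newNbrs G₂ i) :
    dfTree G₁ = dfTree G₂ := by
  unfold dfTree
  congr 1
  funext u v
  simp only [hs, hN]

lemma dfTree_dfTree {G : SimpleGraph (Fin n)} (hG : G.Connected) (hn : 0 < n) :
    dfTree (dfTree G) = dfTree G :=
  dfTree_congr (fun i => by rw [stackAt, stackAt, runEq_dfTree hG hn])
    (newNbrs_dfTree hG hn)

lemma filter_eq_sup {T : SimpleGraph (Fin n)} (hT : T.Connected) (hn : 0 < n)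
    {E : Set (Sym2 (Fin n))} (hE : E ⊆ permittedSet T) {i : ℕ}
    {v : Fin n} {r : List (Fin n)} {A : Finset (Fin n)}
    {fI : Fintype ((T ⊔ SimpleGraph.fromEdgeSet E).neighborSet v)}
    (hst : dfsState T i = (v :: r, A)) :
    (@SimpleGraph.neighborFinset _ (T ⊔ SimpleGraph.fromEdgeSet E) v fI).filter
        (fun w => w ∉ A ∧ w ∉ (v :: r)) =
      (T.neighborFinset v).filter (fun w => w ∉ A ∧ w ∉ (v :: r)) := by
  ext w
  simp only [Finset.mem_filter, SimpleGraph.mem_neighborFinset]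
  constructor
  · rintro ⟨hadj, hP⟩
    refine ⟨?_, hP⟩
    rcases (SimpleGraph.sup_adj _ _ _ _).1 hadj with h | h
    · exact h
    · exfalso
      obtain ⟨hmem, hne⟩ := (SimpleGraph.fromEdgeSet_adj _).1 h
      obtain ⟨u', v', hpair, -, -, j, hjn, hu', hv'⟩ := hE hmem
      have hstk : v ∈ stackAt T j ∧ w ∈ stackAt T j := by
        rcases Sym2.eq_iff.1 hpair with ⟨rfl, rfl⟩ | ⟨rfl, rfl⟩
        · exact ⟨hu', hv'⟩
        · exact ⟨hv', hu'⟩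
      have hhd : (stackAt T i).head? = some v := by rw [stackAt, hst]; rfl
      have hie : i = eT T v := head_eq_eT hT hn hhd
      have hji : j ≤ i := by
        have := le_eT_of_mem_stack hT hn hstk.1
        omega
      have hws : w ∈ seenAt T i := by
        refine seen_mono T hji ?_
        exact Finset.mem_union_right _ (List.mem_toFinset.2 hstk.2)
      rw [seenAt, stackAt, hst] at hws
      rcases Finset.mem_union.1 hws with h' | h'
      · exact hP.1 h'
      · exact hP.2 (List.mem_toFinset.1 h')
  · rintro ⟨hadj, hP⟩
    exact ⟨(SimpleGraph.sup_adj _ _ _ _).2 (Or.inl hadj), hP⟩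

lemma runEq_sup {T : SimpleGraph (Fin n)} (hT : T.Connected) (hn : 0 < n)
    {E : Set (Sym2 (Fin n))} (hE : E ⊆ permittedSet T) (i : ℕ) :
    dfsState (T ⊔ SimpleGraph.fromEdgeSet E) i = dfsState T i := by
  induction i with
  | zero => rfl
  | succ i ih =>
    rcases hst : dfsState T i with ⟨l, A⟩
    cases l with
    | nil =>
      have hl : stackAt T i = [] := by rw [stackAt, hst]
      have hl' : stackAt (T ⊔ SimpleGraph.fromEdgeSet E) i = [] := by rw [stackAt, ih, hst]
      rw [dfsState_nil hl, dfsState_nil hl', ih]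
    | cons v r =>
      rw [dfsState_cons hst, dfsState_cons (ih.trans hst), filter_eq_sup hT hn hE hst]

lemma dfTree_sup {T : SimpleGraph (Fin n)} (hT : T.Connected) (hn : 0 < n)
    {E : Set (Sym2 (Fin n))} (hE : E ⊆ permittedSet T) :
    dfTree (T ⊔ SimpleGraph.fromEdgeSet E) = dfTree T := by
  refine dfTree_congr (fun i => by rw [stackAt, stackAt, runEq_sup hT hn hE]) (fun i => ?_)
  rcases hst : dfsState T i with ⟨l, A⟩
  have hst' : dfsState (T ⊔ SimpleGraph.fromEdgeSet E) i = (l, A) := by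
    rw [runEq_sup hT hn hE, hst]
  cases l with
  | nil =>
    unfold newNbrs
    rw [hst, hst']
  | cons v r =>
    rw [newNbrs_eq hst, newNbrs_eq hst']
    exact filter_eq_sup hT hn hE hst

lemma dfTree_eq_self {T : SimpleGraph (Fin n)} (hT : T.IsTree) (hn : 0 < n) :
    dfTree T = T := by
  have hconn : T.Connected := hT.isConnected
  have hsub : (dfTree T).edgeFinset ⊆ T.edgeFinset := by
    intro e he
    rw [SimpleGraph.mem_edgeFinset] at he ⊢
    exact SimpleGraph.edgeSet_mono (dfTree_le T) he
  have hcardT : T.edgeFinset.card + 1 = n := by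
    have := hT.card_edgeFinset
    rwa [Fintype.card_fin] at this
  have hcard : (dfTree T).edgeFinset.card = T.edgeFinset.card := by
    rw [dfTree_card hconn hn]
    omega
  have := Finset.eq_of_subset_of_card_le hsub (le_of_eq hcard.symm)
  rwa [Finset.coe_inj.symm, SimpleGraph.coe_edgeFinset, SimpleGraph.coe_edgeFinset,
    SimpleGraph.edgeSet_inj] at this


lemma surplus_mem_permitted_aux {G : SimpleGraph (Fin n)} (hG : G.Connected) (hn : 0 < n)
    {a b : Fin n} (hadj : G.Adj a b) (hnt : ¬ (dfTree G).Adj a b) (hlt : eT G a < eT G b) :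
    s(a, b) ∈ permittedSet (dfTree G) := by
  set i := eT G a with hi
  have hhd : (stackAt G i).head? = some a := eT_spec hG hn a
  have hin : i < n := eT_lt hG hn a
  rcases hl : stackAt G i with _ | ⟨u, r⟩
  · rw [hl] at hhd; simp at hhd
  have hau : u = a := by rw [hl] at hhd; simpa using hhd
  subst hau
  have hst : dfsState G i = (u :: r, (dfsState G i).2) := by rw [← hl]; rfl
  have hbseen : b ∈ seenAt G i := by
    by_contra hbs
    have hbA : b ∉ (dfsState G i).2 := fun h => hbs (Finset.mem_union_left _ h)
    have hbS : b ∉ u :: r := fun h => hbs (Finset.mem_union_right _ (by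
      rw [hl]; exact List.mem_toFinset.2 h))
    have hnew : b ∈ newNbrs G i := mem_newNbrs_iff.2 ⟨u, r, _, hst, hadj, hbA, hbS⟩
    refine hnt ?_
    rw [dfTree, SimpleGraph.fromRel_adj]
    exact ⟨hadj.ne, Or.inl ⟨i, hin, hhd, hnew⟩⟩
  have hbstack : b ∈ stackAt G i := by
    rcases Finset.mem_union.1 hbseen with h | h
    · rw [mem_A_iff hG hn] at h; omega
    · exact List.mem_toFinset.1 h
  exact ⟨u, b, rfl, hadj.ne, hnt, i, hin,
    by rw [stackAt, runEq_dfTree hG hn]; exact mem_stack_of_head hhd,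
    by rw [stackAt, runEq_dfTree hG hn]; exact hbstack⟩

lemma surplus_mem_permitted {G : SimpleGraph (Fin n)} (hG : G.Connected) (hn : 0 < n)
    {e : Sym2 (Fin n)} (he : e ∈ G.edgeSet) (hne : e ∉ (dfTree G).edgeSet) :
    e ∈ permittedSet (dfTree G) := by
  induction e with
  | _ a b =>
    rw [SimpleGraph.mem_edgeSet] at he hne
    have hab : a ≠ b := he.ne
    have : eT G a ≠ eT G b := fun h => hab (eT_inj hG hn h)
    rcases lt_or_gt_of_ne this with h | h
    · exact surplus_mem_permitted_aux hG hn he hne h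
    · have := surplus_mem_permitted_aux hG hn he.symm (fun h' => hne h'.symm) h
      rwa [Sym2.eq_swap] at this

lemma mem_tail_head {T : SimpleGraph (Fin n)} (hT : T.Connected) (hn : 0 < n)
    {u v : Fin n} (hne : u ≠ v)
    (hj : ∃ j < n, u ∈ stackAt T j ∧ v ∈ stackAt T j) (hlt : eT T u < eT T v) :
    eT T u ∈ Finset.Ico 1 n ∧ (stackAt T (eT T u)).head? = some u ∧
      v ∈ (stackAt T (eT T u)).tail := by
  obtain ⟨j, hjn, hu, hv⟩ := hj
  set t := eT T u with ht
  have hhd : (stackAt T t).head? = some u := eT_spec hT hn u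
  have hjt : j ≤ t := le_eT_of_mem_stack hT hn hu
  have hvt : v ∈ stackAt T t := stack_persist_until hT hn hv hjt (by omega)
  have htail : v ∈ (stackAt T t).tail := by
    rcases hl : stackAt T t with _ | ⟨w, r⟩
    · rw [hl] at hvt; simp at hvt
    · have hwu : w = u := by rw [hl] at hhd; simpa using hhd
      subst hwu
      rw [hl] at hvt
      rcases List.mem_cons.1 hvt with rfl | h
      · exact absurd rfl hne
      · exact h
  refine ⟨Finset.mem_Ico.2 ⟨?_, eT_lt hT hn u⟩, hhd, htail⟩
  by_contra h0
  have ht0 : t = 0 := by omega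
  rw [ht0, stackAt, dfsState_zero T hn] at htail
  simp at htail

lemma permitted_card {T : SimpleGraph (Fin n)} (hT : T.Connected) (hn : 0 < n)
    (hself : dfTree T = T) :
    (Finset.univ.filter (· ∈ permittedSet T)).card = area T := by
  letI : Inhabited (Fin n) := ⟨⟨0, hn⟩⟩
  classical
  have hB : ((Finset.Ico 1 n).sigma (fun i => (stackAt T i).tail.toFinset)).card = area T := by
    rw [Finset.card_sigma, area]
    refine Finset.sum_congr rfl fun i _ => ?_
    rw [List.toFinset_card_of_nodup (stack_nodup T i).tail, List.length_tail, dfw]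
  rw [← hB]
  refine (Finset.card_bij (fun a _ => s((stackAt T a.1).headI, a.2)) ?_ ?_ ?_).symm
  · -- maps into permitted
    rintro ⟨j, w⟩ ha
    obtain ⟨hj, hw⟩ := Finset.mem_sigma.1 ha
    obtain ⟨hj1, hjn⟩ := Finset.mem_Ico.1 hj
    rw [List.mem_toFinset] at hw
    rcases hl : stackAt T j with _ | ⟨u, r⟩
    · exact absurd hl (stack_ne_nil hT hn hjn)
    rw [hl] at hw
    simp only [List.tail_cons] at hw
    have hheadI : (stackAt T j).headI = u := by rw [hl]; rfl
    have hhd : (stackAt T j).head? = some u := by rw [hl]; rfl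
    have hjeT : j = eT T u := head_eq_eT hT hn hhd
    have hwu : w ≠ u := by
      intro h
      subst h
      exact (List.nodup_cons.1 (hl ▸ stack_nodup T j)).1 hw
    have hws : w ∈ stackAt T j := by rw [hl]; exact List.mem_cons_of_mem _ hw
    have hnadj : ¬ T.Adj u w := by
      intro hadj
      rw [← hself] at hadj
      rcases (dfTree_adj hT hn).1 hadj with ⟨hw0, hupar⟩ | ⟨hu0, hwpar⟩
      · -- u = par T w : w discovered at step j, so w not in stack j
        have : eT T (par T w) = dT T w := eT_par hT hn hw0
        rw [← hupar, ← hjeT] at this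
        have hnew : w ∈ newNbrs T (dT T w) := dT_spec hT hn hw0
        rw [← this] at hnew
        obtain ⟨v', r', A', hst', -, -, hnotin⟩ := mem_newNbrs_iff.1 hnew
        have : stackAt T j = v' :: r' := by rw [stackAt, hst']
        rw [this] at hws
        exact hnotin hws
      · -- w = par T u : then eT w < eT u = j, but w in stack j needs j ≤ eT w
        have hlt : eT T (par T u) < eT T u := eT_par_lt hT hn hu0
        rw [← hwpar, ← hjeT] at hlt
        have := le_eT_of_mem_stack hT hn hws
        omega
    show s((u :: r).headI, w) ∈ Finset.univ.filter (· ∈ permittedSet T)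
    rw [Finset.mem_filter]
    exact ⟨Finset.mem_univ _, u, w, rfl, fun h => hwu h.symm, hnadj, j, hjn,
      mem_stack_of_head hhd, hws⟩
  · -- injective
    rintro ⟨j, w⟩ ha ⟨j', w'⟩ ha' heq
    obtain ⟨hj, hw⟩ := Finset.mem_sigma.1 ha
    obtain ⟨hj', hw'⟩ := Finset.mem_sigma.1 ha'
    obtain ⟨hj1, hjn⟩ := Finset.mem_Ico.1 hj
    obtain ⟨hj1', hjn'⟩ := Finset.mem_Ico.1 hj'
    rw [List.mem_toFinset] at hw hw'
    -- setup heads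
    rcases hl : stackAt T j with _ | ⟨u, r⟩
    · exact absurd hl (stack_ne_nil hT hn hjn)
    rcases hl' : stackAt T j' with _ | ⟨u', r'⟩
    · exact absurd hl' (stack_ne_nil hT hn hjn')
    have hhd : (stackAt T j).head? = some u := by rw [hl]; rfl
    have hhd' : (stackAt T j').head? = some u' := by rw [hl']; rfl
    have hhI : (stackAt T j).headI = u := by rw [hl]; rfl
    have hhI' : (stackAt T j').headI = u' := by rw [hl']; rfl
    rw [hl] at hw; rw [hl'] at hw'
    simp only [List.tail_cons] at hw hw'
    have hwu : w ≠ u := fun h =>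
      (List.nodup_cons.1 (hl ▸ stack_nodup T j)).1 (h ▸ hw)
    have hwu' : w' ≠ u' := fun h =>
      (List.nodup_cons.1 (hl' ▸ stack_nodup T j')).1 (h ▸ hw')
    change s((stackAt T j).headI, w) = s((stackAt T j').headI, w') at heq
    rw [hhI, hhI'] at heq
    have hjeT : j = eT T u := head_eq_eT hT hn hhd
    have hjeT' : j' = eT T u' := head_eq_eT hT hn hhd'
    rcases Sym2.eq_iff.1 heq with ⟨rfl, rfl⟩ | ⟨rfl, rfl⟩
    · have : j = j' := by rw [hjeT, hjeT']
      subst this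
      rfl
    · -- u = w', w = u' : impossible
      exfalso
      have h1 : j ≤ eT T w := le_eT_of_mem_stack hT hn
        (by rw [hl]; exact List.mem_cons_of_mem _ hw)
      have h2 : j' ≤ eT T u := le_eT_of_mem_stack hT hn
        (by rw [hl']; exact List.mem_cons_of_mem _ hw')
      have hjeT' : j' = eT T w := head_eq_eT hT hn hhd'
      rw [← hjeT'] at h1
      rw [← hjeT] at h2
      have hjj : j = j' := by omega
      subst hjj
      rw [hhd] at hhd'
      exact hwu (by simpa using hhd'.symm)
  · -- surjective
    intro e he
    obtain ⟨-, u, v, rfl, hne, hnadj, j, hjn, hu, hv⟩ := Finset.mem_filter.1 he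
    have heT : eT T u ≠ eT T v := fun h => hne (eT_inj hT hn h)
    rcases lt_or_gt_of_ne heT with hlt | hlt
    · obtain ⟨hmem, hhd, htail⟩ := mem_tail_head hT hn hne ⟨j, hjn, hu, hv⟩ hlt
      refine ⟨⟨eT T u, v⟩, Finset.mem_sigma.2 ⟨hmem, List.mem_toFinset.2 htail⟩, ?_⟩
      have huI : (stackAt T (eT T u)).headI = u := by
        rcases hl : stackAt T (eT T u) with _ | ⟨w, r⟩
        · rw [hl] at hhd; simp at hhd
        · rw [hl] at hhd; simpa using hhd
      show s((stackAt T (eT T u)).headI, v) = s(u, v)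
      rw [huI]
    · obtain ⟨hmem, hhd, htail⟩ := mem_tail_head hT hn (Ne.symm hne) ⟨j, hjn, hv, hu⟩ hlt
      refine ⟨⟨eT T v, u⟩, Finset.mem_sigma.2 ⟨hmem, List.mem_toFinset.2 htail⟩, ?_⟩
      have hvI : (stackAt T (eT T v)).headI = v := by
        rcases hl : stackAt T (eT T v) with _ | ⟨w, r⟩
        · rw [hl] at hhd; simp at hhd
        · rw [hl] at hhd; simpa using hhd
      show s((stackAt T (eT T v)).headI, u) = s(u, v)
      rw [hvI, Sym2.eq_swap]


lemma permitted_not_edge {T : SimpleGraph (Fin n)} {e : Sym2 (Fin n)}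
    (he : e ∈ permittedSet T) : e ∉ T.edgeSet ∧ ¬ e.IsDiag := by
  obtain ⟨u, v, rfl, hne, hnadj, -⟩ := he
  constructor
  · rw [SimpleGraph.mem_edgeSet]; exact hnadj
  · rw [Sym2.mk_isDiag_iff]; exact hne

lemma sup_edgeFinset {T : SimpleGraph (Fin n)} {S : Finset (Sym2 (Fin n))}
    (hS : ∀ e ∈ S, e ∈ permittedSet T) :
    (T ⊔ SimpleGraph.fromEdgeSet ↑S).edgeFinset = T.edgeFinset ∪ S := by
  apply Finset.coe_injective
  rw [SimpleGraph.coe_edgeFinset, Finset.coe_union, SimpleGraph.coe_edgeFinset,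
    SimpleGraph.edgeSet_sup, SimpleGraph.edgeSet_fromEdgeSet]
  congr 1
  ext e
  simp only [Set.mem_diff, Set.mem_setOf_eq, Finset.mem_coe]
  exact ⟨fun h => h.1, fun h => ⟨h, (permitted_not_edge (hS e h)).2⟩⟩

lemma disjoint_permitted {T : SimpleGraph (Fin n)} {S : Finset (Sym2 (Fin n))}
    (hS : ∀ e ∈ S, e ∈ permittedSet T) : Disjoint T.edgeFinset S := by
  rw [Finset.disjoint_left]
  intro e heT heS
  exact (permitted_not_edge (hS e heS)).1 (SimpleGraph.mem_edgeFinset.1 heT)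

lemma surplus_eq_card {G : SimpleGraph (Fin n)} :
    surplus G = (G.edgeFinset.card : ℤ) - ((n : ℤ) - 1) := by
  rw [surplus, ← SimpleGraph.coe_edgeFinset, Set.ncard_coe_finset]

lemma isTree_card_edgeFinset {T : SimpleGraph (Fin n)} (hT : T.IsTree) :
    T.edgeFinset.card = n - 1 := by
  have := hT.card_edgeFinset
  rw [Fintype.card_fin] at this
  omega

lemma fiber_sum (hn : 0 < n) {p : ℝ} (hp0 : 0 < p) (hp1 : p < 1)
    {T : SimpleGraph (Fin n)} (hT : T.IsTree) :
    ∑ G ∈ (Finset.univ.filter (fun G : SimpleGraph (Fin n) => G.Connected)).filter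
        (fun G => dfTree G = T),
      p ^ surplus G * (1 - p) ^ (-(surplus G)) = treeWeight p T := by
  have h1p : (1 : ℝ) - p ≠ 0 := by linarith
  have hTconn : T.Connected := hT.isConnected
  have hTself : dfTree T = T := dfTree_eq_self hT hn
  have hcardT : T.edgeFinset.card = n - 1 := isTree_card_edgeFinset hT
  have step1 :
      ∑ G ∈ (Finset.univ.filter (fun G : SimpleGraph (Fin n) => G.Connected)).filter
          (fun G => dfTree G = T),
        p ^ surplus G * (1 - p) ^ (-(surplus G)) =
      ∑ S ∈ (Finset.univ.filter (· ∈ permittedSet T)).powerset, (p / (1 - p)) ^ S.card := by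
    refine Finset.sum_nbij' (fun G => G.edgeFinset \ T.edgeFinset)
      (fun S => T ⊔ SimpleGraph.fromEdgeSet ↑S) ?_ ?_ ?_ ?_ ?_
    · -- maps to powerset
      intro G hGm
      rw [Finset.mem_filter, Finset.mem_filter] at hGm
      obtain ⟨⟨-, hGconn⟩, hfib⟩ := hGm
      rw [Finset.mem_powerset]
      intro e he
      rw [Finset.mem_sdiff] at he
      rw [Finset.mem_filter]
      refine ⟨Finset.mem_univ _, ?_⟩
      rw [← hfib]
      exact surplus_mem_permitted hGconn hn (SimpleGraph.mem_edgeFinset.1 he.1)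
        (fun h => he.2 (SimpleGraph.mem_edgeFinset.2 (hfib ▸ h)))
    · -- j maps back
      intro S hSm
      rw [Finset.mem_powerset] at hSm
      have hS : ∀ e ∈ S, e ∈ permittedSet T := fun e he =>
        (Finset.mem_filter.1 (hSm he)).2
      have hS' : (↑S : Set (Sym2 (Fin n))) ⊆ permittedSet T := fun e he => hS e he
      rw [Finset.mem_filter, Finset.mem_filter]
      refine ⟨⟨Finset.mem_univ _, SimpleGraph.Connected.mono le_sup_left hTconn⟩, ?_⟩
      rw [dfTree_sup hTconn hn hS', hTself]
    · -- left inverse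
      intro G hGm
      rw [Finset.mem_filter, Finset.mem_filter] at hGm
      obtain ⟨⟨-, hGconn⟩, hfib⟩ := hGm
      have hle : T ≤ G := hfib ▸ dfTree_le G
      rw [← SimpleGraph.edgeSet_inj, SimpleGraph.edgeSet_sup, SimpleGraph.edgeSet_fromEdgeSet,
        Finset.coe_sdiff, SimpleGraph.coe_edgeFinset, SimpleGraph.coe_edgeFinset]
      have hnd : (G.edgeSet \ T.edgeSet) \ Sym2.diagSet = G.edgeSet \ T.edgeSet := by
        ext e
        simp only [Set.mem_diff, Sym2.mem_diagSet]
        exact ⟨fun h => h.1, fun h => ⟨h, SimpleGraph.not_isDiag_of_mem_edgeSet _ h.1⟩⟩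
      rw [hnd, Set.union_diff_cancel (SimpleGraph.edgeSet_mono hle)]
    · -- right inverse
      intro S hSm
      rw [Finset.mem_powerset] at hSm
      have hS : ∀ e ∈ S, e ∈ permittedSet T := fun e he =>
        (Finset.mem_filter.1 (hSm he)).2
      ext e
      simp only [Finset.mem_sdiff, SimpleGraph.mem_edgeFinset, SimpleGraph.edgeSet_sup,
        SimpleGraph.edgeSet_fromEdgeSet, Set.mem_union, Set.mem_diff, Set.mem_setOf_eq,
        Finset.mem_coe]
      constructor
      · rintro ⟨h1 | ⟨h1, -⟩, h2⟩
        · exact absurd h1 h2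
        · exact h1
      · intro he
        obtain ⟨hnotE, hnotD⟩ := permitted_not_edge (hS e he)
        exact ⟨Or.inr ⟨he, hnotD⟩, hnotE⟩
    · -- weights
      intro G hGm
      rw [Finset.mem_filter, Finset.mem_filter] at hGm
      obtain ⟨⟨-, hGconn⟩, hfib⟩ := hGm
      have hle : T ≤ G := hfib ▸ dfTree_le G
      have hsub : T.edgeFinset ⊆ G.edgeFinset := SimpleGraph.edgeFinset_mono hle
      have hcard : (G.edgeFinset \ T.edgeFinset).card =
          G.edgeFinset.card - (n - 1) := by
        rw [Finset.card_sdiff_of_subset hsub, hcardT]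
      have hge : n - 1 ≤ G.edgeFinset.card := hcardT ▸ Finset.card_le_card hsub
      have hsurp : surplus G = (((G.edgeFinset \ T.edgeFinset).card : ℕ) : ℤ) := by
        rw [surplus_eq_card, hcard]
        push_cast
        omega
      rw [hsurp]
      show p ^ (((G.edgeFinset \ T.edgeFinset).card : ℕ) : ℤ) *
          (1 - p) ^ (-(((G.edgeFinset \ T.edgeFinset).card : ℕ) : ℤ)) =
        (p / (1 - p)) ^ (G.edgeFinset \ T.edgeFinset).card
      rw [zpow_neg, zpow_natCast, zpow_natCast, div_pow, div_eq_mul_inv]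
  rw [step1]
  have step2 : ∑ S ∈ (Finset.univ.filter (· ∈ permittedSet T)).powerset,
      (p / (1 - p)) ^ S.card =
      (p / (1 - p) + 1) ^ (Finset.univ.filter (· ∈ permittedSet T)).card := by
    have := Finset.prod_add (fun _ => p / (1 - p)) (fun _ => (1 : ℝ))
      (Finset.univ.filter (· ∈ permittedSet T))
    rw [Finset.prod_const] at this
    rw [this]
    refine Finset.sum_congr rfl fun S _ => ?_
    rw [Finset.prod_const, Finset.prod_const_one, mul_one]
  rw [step2, permitted_card hTconn hn hTself]
  have h3 : p / (1 - p) + 1 = 1 / (1 - p) := by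
    field_simp
    ring
  rw [h3, treeWeight, zpow_neg, zpow_natCast, one_div, inv_pow]

lemma key_sum_eq (hn : 0 < n) {p : ℝ} (hp0 : 0 < p) (hp1 : p < 1) :
    ∑ T ∈ Finset.univ.filter (fun T : SimpleGraph (Fin n) => T.IsTree), treeWeight p T =
      ∑ G' ∈ Finset.univ.filter (fun G' : SimpleGraph (Fin n) => G'.Connected),
        p ^ surplus G' * (1 - p) ^ (-(surplus G')) := by
  have hmap : ∀ G ∈ Finset.univ.filter (fun G : SimpleGraph (Fin n) => G.Connected),
      dfTree G ∈ Finset.univ.filter (fun T : SimpleGraph (Fin n) => T.IsTree) := by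
    intro G hGm
    rw [Finset.mem_filter] at hGm ⊢
    exact ⟨Finset.mem_univ _, dfTree_isTree hGm.2 hn⟩
  rw [← Finset.sum_fiberwise_of_maps_to hmap
    (fun G' => p ^ surplus G' * (1 - p) ^ (-(surplus G')))]
  refine Finset.sum_congr rfl fun T hTm => ?_
  rw [Finset.mem_filter] at hTm
  exact (fiber_sum hn hp0 hp1 hTm.2).symm


end AuxProof

end RandomGraphs

open RandomGraphs in
/-- Fix `p ∈ (0,1)` and `m ≥ 1`.  The random connected graph
`G̃` on `[m]` generated by first choosing a tree `T̃` with probability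
proportional to `(1-p)^{-a(T)}` and then adding each of the `a(T̃)` edges
permitted by `oDFS(T̃)` independently with probability `p` has the same
distribution as a connected graph on `[m]` chosen with probability
proportional to `p^{s(G)} (1-p)^{-s(G)}`, i.e. as a connected component of
`G(n,p)` conditioned to have `m` vertices (relabeled by `[m]`). -/
theorem twoStage_eq_conditioned_component (m : ℕ) (hm : 1 ≤ m)
    (p : ℝ) (hp0 : 0 < p) (hp1 : p < 1)
    (G : SimpleGraph (Fin m)) (hG : G.Connected) :
    twoStageProb p G =
      p ^ surplus G * (1 - p) ^ (-(surplus G)) /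
        ∑ G' ∈ Finset.univ.filter
            (fun G' : SimpleGraph (Fin m) => G'.Connected),
          p ^ surplus G' * (1 - p) ^ (-(surplus G')) := by
  have hn : 0 < m := hm
  have h1p : (1 : ℝ) - p ≠ 0 := by linarith
  unfold twoStageProb
  rw [key_sum_eq hn hp0 hp1]
  simp only [treeWeight]
  rw [div_mul_eq_mul_div, div_mul_eq_mul_div]
  congr 1
  rw [mul_right_comm, ← zpow_add₀ h1p]
  rw [show -(area (dfTree G) : ℤ) + ((area (dfTree G) : ℤ) - surplus G) = -(surplus G) by ring]
  rw [mul_comm]
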